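/- Let P and Q be finite sets of points on the real line with supplies s_p > 0 (p ∈ P) and demands d_q > 0 (q ∈ Q), satisfying Σ_{p∈P} s_p = Σ_{q∈Q} d_q. Fix λ ≥ 0 and let G_λ(P,Q) be the bipartite graph connecting p to q whenever |p − q| ≤ λ. If G_λ(P,Q) admits any satisfying matching (one of value equal to the total supply), then the greedy matching—processing points of P and Q in increasing order of coordinate and assigning each unit of supply to the leftmost unsatisfied demand within distance λ—also produces a satisfying matching. -/

import Mathlib

/-- The greedy matching on the line: supplies `Ps` and demands `Qs` are lists of
(coordinate, amount) pairs sorted by increasing coordinate. Processing points in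
increasing order, each unit of supply is assigned to the leftmost unsatisfied demand
within distance `lam`; demands too far to the left are skipped (no later supply can reach
them), suppliers that cannot reach the current leftmost demand are skipped. Returns the
total matched value. -/
noncomputable def greedy (lam : ℝ) : List (ℝ × ℝ) → List (ℝ × ℝ) → ℝ
  | [], _ => 0
  | _ :: _, [] => 0
  | (p, sp) :: Ps, (q, dq) :: Qs =>
    if q < p - lam then greedy lam ((p, sp) :: Ps) Qs
    else if p + lam < q then greedy lam Ps ((q, dq) :: Qs)
    else if sp ≤ dq then sp + greedy lam Ps ((q, dq - sp) :: Qs)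
    else dq + greedy lam ((p, sp - dq) :: Ps) Qs
  termination_by Ps Qs => (Ps.length, Qs.length)


open Finset in
lemma sum_getD_snd (l : List (ℝ × ℝ)) :
    ∑ i ∈ Finset.range l.length, (l.getD i 0).2 = (l.map Prod.snd).sum := by
  induction l with
  | nil => simp
  | cons hd tl ih =>
    rw [List.length_cons, Finset.sum_range_succ']
    simp only [List.getD_cons_succ, List.getD_cons_zero, List.map_cons, List.sum_cons]
    rw [ih]; ring

lemma head_le_getD {hd : ℝ × ℝ} {tl : List (ℝ × ℝ)}
    (h : (hd :: tl).Pairwise (fun a b => a.1 ≤ b.1)) {i : ℕ} (hi : i < (hd :: tl).length) :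
    hd.1 ≤ ((hd :: tl).getD i 0).1 := by
  rcases List.pairwise_cons.mp h with ⟨h1, -⟩
  match i with
  | 0 => simp
  | (i+1) =>
    rw [List.getD_cons_succ]
    have hi' : i < tl.length := by simpa using hi
    rw [List.getD_eq_getElem _ _ hi']
    exact h1 _ (List.getElem_mem hi')

lemma greedy_aux (lam : ℝ) (hlam : 0 ≤ lam) :
    ∀ N (Ps Qs : List (ℝ × ℝ)), Ps.length + Qs.length ≤ N →
    Ps.Pairwise (fun a b => a.1 ≤ b.1) → Qs.Pairwise (fun a b => a.1 ≤ b.1) →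
    (∀ x ∈ Ps, 0 ≤ x.2) → (∀ x ∈ Qs, 0 ≤ x.2) →
    (Ps.map Prod.snd).sum = (Qs.map Prod.snd).sum →
    (∃ a : ℕ → ℕ → ℝ,
      (∀ i j, 0 ≤ a i j) ∧
      (∀ i < Ps.length, ∀ j < Qs.length,
        a i j ≠ 0 → |(Ps.getD i 0).1 - (Qs.getD j 0).1| ≤ lam) ∧
      (∀ i < Ps.length, ∑ j ∈ Finset.range Qs.length, a i j ≤ (Ps.getD i 0).2) ∧
      (∀ j < Qs.length, ∑ i ∈ Finset.range Ps.length, a i j ≤ (Qs.getD j 0).2) ∧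
      (∑ i ∈ Finset.range Ps.length, ∑ j ∈ Finset.range Qs.length, a i j
        = (Ps.map Prod.snd).sum)) →
    greedy lam Ps Qs = (Ps.map Prod.snd).sum := by
  intro N
  induction N with
  | zero =>
    intro Ps Qs hlen _ _ _ _ htot _
    have : Ps = [] := List.length_eq_zero_iff.mp (by omega)
    subst this; rw [greedy]; simp
  | succ N ih =>
    rintro Ps Qs hlen hPs hQs hP0 hQ0 htot ⟨a, ha0, ha1, ha2, ha3, hatot⟩
    match Ps, Qs with
    | [], Qs => rw [greedy]; simp
    | (p, sp) :: P', [] =>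
      rw [greedy]; simpa using htot.symm
    | (p, sp) :: P', (q, dq) :: Q' =>
      simp only [List.length_cons] at hlen ha1 ha2 ha3 hatot
      obtain ⟨hP1, hPs'⟩ := List.pairwise_cons.mp hPs
      obtain ⟨hQ1, hQs'⟩ := List.pairwise_cons.mp hQs
      have hgetP : ∀ i < P'.length + 1, p ≤ (((p, sp) :: P').getD i 0).1 :=
        fun i hi => head_le_getD hPs (by simpa using hi)
      have hgetQ : ∀ j < Q'.length + 1, q ≤ (((q, dq) :: Q').getD j 0).1 :=
        fun j hj => head_le_getD hQs (by simpa using hj)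
      have hsp0 : 0 ≤ sp := hP0 (p, sp) (by simp)
      have hdq0 : 0 ≤ dq := hQ0 (q, dq) (by simp)
      have hmapP : (((p, sp) :: P').map Prod.snd).sum = sp + (P'.map Prod.snd).sum := by simp
      have hmapQ : (((q, dq) :: Q').map Prod.snd).sum = dq + (Q'.map Prod.snd).sum := by simp
      -- rows and columns are exactly tight
      have hrow : ∀ i < P'.length + 1,
          ∑ j ∈ Finset.range (Q'.length + 1), a i j = (((p, sp) :: P').getD i 0).2 := by
        have h := (Finset.sum_eq_sum_iff_of_le
            (fun i hi => ha2 i (Finset.mem_range.mp hi))).mp ?_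
        · exact fun i hi => h i (Finset.mem_range.mpr hi)
        · rw [← sum_getD_snd ((p, sp) :: P')] at hatot
          simpa using hatot
      have hcol : ∀ j < Q'.length + 1,
          ∑ i ∈ Finset.range (P'.length + 1), a i j = (((q, dq) :: Q').getD j 0).2 := by
        have h := (Finset.sum_eq_sum_iff_of_le
            (fun j hj => ha3 j (Finset.mem_range.mp hj))).mp ?_
        · exact fun j hj => h j (Finset.mem_range.mpr hj)
        · rw [Finset.sum_comm, hatot, htot, ← sum_getD_snd ((q, dq) :: Q')]
          simp
      have hrow0 : a 0 0 + (∑ j ∈ Finset.range Q'.length, a 0 (j + 1)) = sp := by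
        have h := hrow 0 (by omega)
        rw [Finset.sum_range_succ', List.getD_cons_zero] at h
        linarith
      have hcol0 : a 0 0 + (∑ i ∈ Finset.range P'.length, a (i + 1) 0) = dq := by
        have h := hcol 0 (by omega)
        rw [Finset.sum_range_succ', List.getD_cons_zero] at h
        linarith
      set c : ℝ := ∑ i ∈ Finset.range P'.length, a (i + 1) 0 with hcdef
      set r : ℝ := ∑ j ∈ Finset.range Q'.length, a 0 (j + 1) with hrdf
      have hcnn : 0 ≤ c := Finset.sum_nonneg fun i _ => ha0 _ _
      have hrnn : 0 ≤ r := Finset.sum_nonneg fun j _ => ha0 _ _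
      have ha00nn : 0 ≤ a 0 0 := ha0 _ _
      rw [greedy]
      split_ifs with h1 h2 h3
      · -- q < p - lam : drop the (necessarily zero) leftmost demand
        have hdq : dq = 0 := by
          by_contra hdq
          have hex : ∃ i ∈ Finset.range (P'.length + 1), a i 0 ≠ 0 := by
            by_contra h
            push_neg at h
            have h0 := hcol 0 (by omega)
            rw [Finset.sum_eq_zero h] at h0
            exact hdq (by simpa using h0.symm)
          obtain ⟨i, hi, hne⟩ := hex
          have e := ha1 i (by simpa using hi) 0 (by omega) hne
          have hp := hgetP i (by simpa using hi)
          rw [List.getD_cons_zero] at e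
          rcases abs_le.mp e with ⟨e1, e2⟩
          linarith
        have haz : ∀ i ∈ Finset.range (P'.length + 1), a i 0 = 0 := by
          have h := hcol 0 (by omega)
          rw [List.getD_cons_zero, hdq] at h
          exact (Finset.sum_eq_zero_iff_of_nonneg (fun i _ => ha0 i 0)).mp h
        have hrow' : ∀ i < P'.length + 1,
            ∑ j ∈ Finset.range Q'.length, a i (j + 1) = (((p, sp) :: P').getD i 0).2 := by
          intro i hi
          have h := hrow i hi
          rw [Finset.sum_range_succ', haz i (Finset.mem_range.mpr hi)] at h
          linarith
        have hgoal : greedy lam ((p, sp) :: P') Q' = (((p, sp) :: P').map Prod.snd).sum := by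
          apply ih ((p, sp) :: P') Q' (by simp only [List.length_cons]; omega) hPs hQs' hP0
            (fun x hx => hQ0 x (by simp [hx]))
            (by rw [htot, hmapQ, hdq]; ring)
          refine ⟨fun i j => a i (j + 1), fun i j => ha0 _ _, ?_, ?_, ?_, ?_⟩
          · intro i hi j hj hne
            have := ha1 i (by simpa using hi) (j + 1) (by simp at hj ⊢; omega) hne
            simpa using this
          · intro i hi
            exact le_of_eq (hrow' i (by simpa using hi))
          · intro j hj
            have := hcol (j + 1) (by omega)
            rw [List.getD_cons_succ] at this
            simpa using le_of_eq this
          · rw [← sum_getD_snd ((p, sp) :: P')]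
            simp only [List.length_cons]
            exact Finset.sum_congr rfl fun i hi => hrow' i (Finset.mem_range.mp hi)
        exact hgoal
      · -- p + lam < q : drop the (necessarily zero) leftmost supply
        have hsp : sp = 0 := by
          by_contra hsp
          have hex : ∃ j ∈ Finset.range (Q'.length + 1), a 0 j ≠ 0 := by
            by_contra h
            push_neg at h
            have h0 := hrow 0 (by omega)
            rw [Finset.sum_eq_zero h] at h0
            exact hsp (by simpa using h0.symm)
          obtain ⟨j, hj, hne⟩ := hex
          have e := ha1 0 (by omega) j (by simpa using hj) hne
          have hq := hgetQ j (by simpa using hj)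
          rw [List.getD_cons_zero] at e
          rcases abs_le.mp e with ⟨e1, e2⟩
          linarith
        have haz : ∀ j ∈ Finset.range (Q'.length + 1), a 0 j = 0 := by
          have h := hrow 0 (by omega)
          rw [List.getD_cons_zero, hsp] at h
          exact (Finset.sum_eq_zero_iff_of_nonneg (fun j _ => ha0 0 j)).mp h
        have hcol' : ∀ j < Q'.length + 1,
            ∑ i ∈ Finset.range P'.length, a (i + 1) j = (((q, dq) :: Q').getD j 0).2 := by
          intro j hj
          have h := hcol j hj
          rw [Finset.sum_range_succ', haz j (Finset.mem_range.mpr hj)] at h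
          linarith
        have hgoal : greedy lam P' ((q, dq) :: Q') = (P'.map Prod.snd).sum := by
          apply ih P' ((q, dq) :: Q') (by simp only [List.length_cons]; omega) hPs' hQs
            (fun x hx => hP0 x (by simp [hx]))
            hQ0 (by rw [hmapP, hsp] at htot; linarith)
          refine ⟨fun i j => a (i + 1) j, fun i j => ha0 _ _, ?_, ?_, ?_, ?_⟩
          · intro i hi j hj hne
            have := ha1 (i + 1) (by omega) j (by simpa using hj) hne
            simpa using this
          · intro i hi
            have := hrow (i + 1) (by omega)
            rw [List.getD_cons_succ] at this
            simpa using le_of_eq this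
          · intro j hj
            exact le_of_eq (hcol' j (by simpa using hj))
          · calc ∑ i ∈ Finset.range P'.length, ∑ j ∈ Finset.range ((q, dq) :: Q').length,
                  a (i + 1) j
                = ∑ j ∈ Finset.range (Q'.length + 1), ∑ i ∈ Finset.range P'.length,
                  a (i + 1) j := by rw [List.length_cons]; exact Finset.sum_comm
              _ = ∑ j ∈ Finset.range (Q'.length + 1), (((q, dq) :: Q').getD j 0).2 :=
                  Finset.sum_congr rfl fun j hj => hcol' j (Finset.mem_range.mp hj)
              _ = (((q, dq) :: Q').map Prod.snd).sum := by
                  rw [← sum_getD_snd ((q, dq) :: Q')]; simp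
              _ = (P'.map Prod.snd).sum := by rw [← htot, hmapP, hsp]; ring
        rw [hgoal, hmapP, hsp]; ring
      · -- reachable, sp ≤ dq : send all of sp to q, reroute
        push_neg at h1 h2
        have hck : dq - sp + r = c := by linarith
        have hc0r : c = 0 → r = 0 := fun h => by nlinarith
        have hc0z : c = 0 → ∀ j ∈ Finset.range Q'.length, a 0 (j + 1) = 0 := fun h =>
          (Finset.sum_eq_zero_iff_of_nonneg (fun j _ => ha0 _ _)).mp (hrdf ▸ hc0r h)
        have hc0x : c = 0 → ∀ i ∈ Finset.range P'.length, a (i + 1) 0 = 0 := fun h =>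
          (Finset.sum_eq_zero_iff_of_nonneg (fun i _ => ha0 _ _)).mp (hcdef ▸ h)
        set b : ℕ → ℕ → ℝ := fun i j =>
          if j = 0 then a (i + 1) 0 * ((dq - sp) / c)
          else a (i + 1) j + a (i + 1) 0 * (a 0 j / c) with hbdef
        have hb0 : ∀ i j, 0 ≤ b i j := by
          intro i j
          simp only [hbdef]
          split_ifs
          · exact mul_nonneg (ha0 _ _) (div_nonneg (by linarith) hcnn)
          · exact add_nonneg (ha0 _ _) (mul_nonneg (ha0 _ _) (div_nonneg (ha0 _ _) hcnn))
        have hbrow : ∀ i < P'.length,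
            ∑ j ∈ Finset.range (Q'.length + 1), b i j = (P'.getD i 0).2 := by
          intro i hi
          rw [Finset.sum_range_succ']
          have hb1 : ∀ j, b i (j + 1) = a (i + 1) (j + 1) + a (i + 1) 0 * (a 0 (j + 1) / c) :=
            fun j => by simp only [hbdef]; simp
          have hb2 : b i 0 = a (i + 1) 0 * ((dq - sp) / c) := by simp only [hbdef]; simp
          rw [hb2]
          simp only [hb1]
          rw [Finset.sum_add_distrib]
          have hmul : ∑ j ∈ Finset.range Q'.length, a (i + 1) 0 * (a 0 (j + 1) / c)
              = a (i + 1) 0 * (r / c) := by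
            rw [← Finset.mul_sum, ← Finset.sum_div]
          rw [hmul]
          have hrs : a (i + 1) 0 + ∑ j ∈ Finset.range Q'.length, a (i + 1) (j + 1)
              = (P'.getD i 0).2 := by
            have h := hrow (i + 1) (by omega)
            rw [Finset.sum_range_succ', List.getD_cons_succ] at h
            linarith
          have key : a (i + 1) 0 * ((dq - sp) / c) + a (i + 1) 0 * (r / c)
              = a (i + 1) 0 := by
            rcases eq_or_ne c 0 with hc | hc
            · simp [hc0x hc i (Finset.mem_range.mpr hi)]
            · field_simp
              linear_combination a (i + 1) 0 * hck
          linarith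
        have hbcol0 : ∑ i ∈ Finset.range P'.length, b i 0 = dq - sp := by
          have hb2 : ∀ i, b i 0 = a (i + 1) 0 * ((dq - sp) / c) := fun i => by simp only [hbdef]; simp
          simp only [hb2]
          rw [← Finset.sum_mul, ← hcdef]
          rcases eq_or_ne c 0 with hc | hc
          · have : dq = sp := by nlinarith [hc0r hc]
            rw [hc, this]; ring
          · rw [mul_div_assoc', mul_comm, mul_div_assoc, div_self hc, mul_one]
        have hbcols : ∀ j < Q'.length,
            ∑ i ∈ Finset.range P'.length, b i (j + 1) = (Q'.getD j 0).2 := by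
          intro j hj
          have hb1 : ∀ i, b i (j + 1) = a (i + 1) (j + 1) + a (i + 1) 0 * (a 0 (j + 1) / c) :=
            fun i => by simp only [hbdef]; simp
          simp only [hb1]
          rw [Finset.sum_add_distrib, ← Finset.sum_mul, ← hcdef]
          have hcs : a 0 (j + 1) + ∑ i ∈ Finset.range P'.length, a (i + 1) (j + 1)
              = (Q'.getD j 0).2 := by
            have h := hcol (j + 1) (by omega)
            rw [Finset.sum_range_succ', List.getD_cons_succ] at h
            linarith
          have key : c * (a 0 (j + 1) / c) = a 0 (j + 1) := by
            rcases eq_or_ne c 0 with hc | hc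
            · simp [hc0z hc j (Finset.mem_range.mpr hj), hc]
            · rw [mul_div_assoc', mul_comm, mul_div_assoc, div_self hc, mul_one]
          linarith
        have hgoal : greedy lam P' ((q, dq - sp) :: Q') = (P'.map Prod.snd).sum := by
          apply ih P' ((q, dq - sp) :: Q') (by simp only [List.length_cons] at *; omega) hPs'
            (List.pairwise_cons.mpr ⟨fun x hx => hQ1 x hx, hQs'⟩)
            (fun x hx => hP0 x (by simp [hx]))
            (fun x hx => by
              rcases List.mem_cons.mp hx with h | h
              · rw [h]; simp; linarith
              · exact hQ0 x (by simp [h]))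
            (by rw [hmapP] at htot; rw [hmapQ] at htot; simp; linarith)
          refine ⟨b, hb0, ?_, ?_, ?_, ?_⟩
          · intro i hi j hj hne
            match j with
            | 0 =>
              have hA : a (i + 1) 0 ≠ 0 := by
                intro h; apply hne; simp only [hbdef]; simp [h]
              have e := ha1 (i + 1) (by omega) 0 (by omega) hA
              rw [List.getD_cons_succ] at e
              rw [List.getD_cons_zero] at e ⊢
              exact e
            | (k + 1) =>
              have hor : a (i + 1) (k + 1) ≠ 0 ∨ (a (i + 1) 0 ≠ 0 ∧ a 0 (k + 1) ≠ 0) := by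
                rcases eq_or_ne (a (i + 1) (k + 1)) 0 with h2 | h2
                · rcases eq_or_ne (a (i + 1) 0) 0 with h3 | h3
                  · exfalso; apply hne; simp only [hbdef]; simp [h2, h3]
                  · rcases eq_or_ne (a 0 (k + 1)) 0 with h4 | h4
                    · exfalso; apply hne; simp only [hbdef]; simp [h2, h4]
                    · exact Or.inr ⟨h3, h4⟩
                · exact Or.inl h2
              rw [List.getD_cons_succ]
              have hjq : k + 1 < Q'.length + 1 := by
                simp only [List.length_cons] at hj; omega
              rcases hor with h2 | ⟨h3, h4⟩
              · have e := ha1 (i + 1) (by omega) (k + 1) hjq h2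
                rw [List.getD_cons_succ, List.getD_cons_succ] at e
                exact e
              · have e1 := ha1 (i + 1) (by omega) 0 (by omega) h3
                have e2 := ha1 0 (by omega) (k + 1) hjq h4
                rw [List.getD_cons_succ, List.getD_cons_zero] at e1
                rw [List.getD_cons_zero, List.getD_cons_succ] at e2
                have hp := hgetP (i + 1) (by omega)
                have hq := hgetQ (k + 1) hjq
                rw [List.getD_cons_succ] at hp hq
                rcases abs_le.mp e1 with ⟨a1, a2⟩
                rcases abs_le.mp e2 with ⟨b1, b2⟩
                rw [abs_le]
                constructor <;> linarith
          · intro i hi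
            exact le_of_eq (hbrow i hi)
          · intro j hj
            simp only [List.length_cons] at hj
            match j with
            | 0 => rw [List.getD_cons_zero]; exact le_of_eq hbcol0
            | (k + 1) =>
              rw [List.getD_cons_succ]
              exact le_of_eq (hbcols k (by omega))
          · rw [← sum_getD_snd P']
            simp only [List.length_cons]
            exact Finset.sum_congr rfl fun i hi => hbrow i (Finset.mem_range.mp hi)
        rw [hgoal, hmapP]
      · -- reachable, dq < sp : satisfy q entirely, reroute
        push_neg at h1 h2 h3
        have ha00dq : a 0 0 ≤ dq := by linarith
        have hrpos : 0 < r := by linarith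
        have hrne : r ≠ 0 := ne_of_gt hrpos
        have hrk : sp - dq + (dq - a 0 0) = r := by linarith
        set b : ℕ → ℕ → ℝ := fun i j =>
          if i = 0 then a 0 (j + 1) * ((sp - dq) / r)
          else a i (j + 1) + a 0 (j + 1) * (a i 0 / r) with hbdef
        have hb0 : ∀ i j, 0 ≤ b i j := by
          intro i j
          simp only [hbdef]
          split_ifs
          · exact mul_nonneg (ha0 _ _) (div_nonneg (by linarith) hrnn)
          · exact add_nonneg (ha0 _ _) (mul_nonneg (ha0 _ _) (div_nonneg (ha0 _ _) hrnn))
        have hbrow0 : ∑ j ∈ Finset.range Q'.length, b 0 j = sp - dq := by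
          have hb2 : ∀ j, b 0 j = a 0 (j + 1) * ((sp - dq) / r) := fun j => by simp only [hbdef]; simp
          simp only [hb2]
          rw [← Finset.sum_mul, ← hrdf, mul_div_assoc', mul_comm, mul_div_assoc,
            div_self hrne, mul_one]
        have hbrows : ∀ i < P'.length,
            ∑ j ∈ Finset.range Q'.length, b (i + 1) j = (P'.getD i 0).2 := by
          intro i hi
          have hb1 : ∀ j, b (i + 1) j = a (i + 1) (j + 1) + a 0 (j + 1) * (a (i + 1) 0 / r) :=
            fun j => by simp only [hbdef]; simp
          simp only [hb1]
          rw [Finset.sum_add_distrib, ← Finset.sum_mul, ← hrdf]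
          have hrs : a (i + 1) 0 + ∑ j ∈ Finset.range Q'.length, a (i + 1) (j + 1)
              = (P'.getD i 0).2 := by
            have h := hrow (i + 1) (by omega)
            rw [Finset.sum_range_succ', List.getD_cons_succ] at h
            linarith
          have key : r * (a (i + 1) 0 / r) = a (i + 1) 0 := by
            rw [mul_div_assoc', mul_comm, mul_div_assoc, div_self hrne, mul_one]
          linarith
        have hbcols : ∀ j < Q'.length,
            ∑ i ∈ Finset.range (P'.length + 1), b i j = (Q'.getD j 0).2 := by
          intro j hj
          rw [Finset.sum_range_succ']
          have hb1 : ∀ i, b (i + 1) j = a (i + 1) (j + 1) + a 0 (j + 1) * (a (i + 1) 0 / r) :=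
            fun i => by simp only [hbdef]; simp
          have hb2 : b 0 j = a 0 (j + 1) * ((sp - dq) / r) := by simp only [hbdef]; simp
          rw [hb2]
          simp only [hb1]
          rw [Finset.sum_add_distrib]
          have hmul : ∑ i ∈ Finset.range P'.length, a 0 (j + 1) * (a (i + 1) 0 / r)
              = a 0 (j + 1) * ((dq - a 0 0) / r) := by
            rw [← Finset.mul_sum, ← Finset.sum_div]
            congr 2
            linarith [hcol0]
          rw [hmul]
          have hcs : a 0 (j + 1) + ∑ i ∈ Finset.range P'.length, a (i + 1) (j + 1)
              = (Q'.getD j 0).2 := by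
            have h := hcol (j + 1) (by omega)
            rw [Finset.sum_range_succ', List.getD_cons_succ] at h
            linarith
          have key : a 0 (j + 1) * ((sp - dq) / r) + a 0 (j + 1) * ((dq - a 0 0) / r)
              = a 0 (j + 1) := by
            field_simp
            linear_combination a 0 (j + 1) * hrk
          linarith
        have hgoal : greedy lam ((p, sp - dq) :: P') Q'
            = (((p, sp - dq) :: P').map Prod.snd).sum := by
          apply ih ((p, sp - dq) :: P') Q' (by simp only [List.length_cons] at *; omega)
            (List.pairwise_cons.mpr ⟨fun x hx => hP1 x hx, hPs'⟩) hQs'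
            (fun x hx => by
              rcases List.mem_cons.mp hx with h | h
              · rw [h]; simp; linarith
              · exact hP0 x (by simp [h]))
            (fun x hx => hQ0 x (by simp [hx]))
            (by rw [hmapP] at htot; rw [hmapQ] at htot; simp; linarith)
          refine ⟨b, hb0, ?_, ?_, ?_, ?_⟩
          · intro i hi j hj hne
            have hjq : j < Q'.length := by simpa using hj
            match i with
            | 0 =>
              have hA : a 0 (j + 1) ≠ 0 := by
                intro h; apply hne; simp only [hbdef]; simp [h]
              have e := ha1 0 (by omega) (j + 1) (by omega) hA
              rw [List.getD_cons_succ] at e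
              rw [List.getD_cons_zero] at e ⊢
              exact e
            | (k + 1) =>
              have hkP : k + 1 < P'.length + 1 := by
                simp only [List.length_cons] at hi; omega
              have hor : a (k + 1) (j + 1) ≠ 0 ∨ (a 0 (j + 1) ≠ 0 ∧ a (k + 1) 0 ≠ 0) := by
                rcases eq_or_ne (a (k + 1) (j + 1)) 0 with h2 | h2
                · rcases eq_or_ne (a 0 (j + 1)) 0 with h3 | h3
                  · exfalso; apply hne; simp only [hbdef]; simp [h2, h3]
                  · rcases eq_or_ne (a (k + 1) 0) 0 with h4 | h4
                    · exfalso; apply hne; simp only [hbdef]; simp [h2, h4]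
                    · exact Or.inr ⟨h3, h4⟩
                · exact Or.inl h2
              rw [List.getD_cons_succ]
              rcases hor with h2 | ⟨h3, h4⟩
              · have e := ha1 (k + 1) hkP (j + 1) (by omega) h2
                rw [List.getD_cons_succ, List.getD_cons_succ] at e
                exact e
              · have e1 := ha1 0 (by omega) (j + 1) (by omega) h3
                have e2 := ha1 (k + 1) hkP 0 (by omega) h4
                rw [List.getD_cons_zero, List.getD_cons_succ] at e1
                rw [List.getD_cons_succ, List.getD_cons_zero] at e2
                have hp := hgetP (k + 1) hkP
                have hq := hgetQ (j + 1) (by omega)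
                rw [List.getD_cons_succ] at hp hq
                rcases abs_le.mp e1 with ⟨a1, a2⟩
                rcases abs_le.mp e2 with ⟨b1, b2⟩
                rw [abs_le]
                constructor <;> linarith
          · intro i hi
            simp only [List.length_cons] at hi
            match i with
            | 0 => rw [List.getD_cons_zero]; exact le_of_eq hbrow0
            | (k + 1) =>
              rw [List.getD_cons_succ]
              exact le_of_eq (hbrows k (by omega))
          · intro j hj
            exact le_of_eq (hbcols j hj)
          · rw [← sum_getD_snd ((p, sp - dq) :: P')]
            simp only [List.length_cons]
            rw [Finset.sum_comm]
            calc ∑ j ∈ Finset.range Q'.length, ∑ i ∈ Finset.range (P'.length + 1), b i j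
                = ∑ j ∈ Finset.range Q'.length, (Q'.getD j 0).2 :=
                  Finset.sum_congr rfl fun j hj => hbcols j (Finset.mem_range.mp hj)
              _ = (Q'.map Prod.snd).sum := sum_getD_snd Q'
              _ = ∑ i ∈ Finset.range (P'.length + 1), (((p, sp - dq) :: P').getD i 0).2 := by
                  have hs := sum_getD_snd ((p, sp - dq) :: P')
                  rw [List.length_cons] at hs
                  rw [hs]
                  rw [hmapP] at htot; rw [hmapQ] at htot
                  simp only [List.map_cons, List.sum_cons]
                  linarith
        rw [hgoal] at *
        rw [hmapP]
        simp
        linarith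

/-- Points on the line with positive supplies and demands of equal total, sorted by
coordinate: if the graph `G_λ(P,Q)` (connecting supply points to demand points at
distance at most `λ`) admits any satisfying matching, then the greedy matching is also
satisfying, i.e. its value is the total supply. -/
theorem stmt13 (lam : ℝ) (hlam : 0 ≤ lam)
    (Ps Qs : List (ℝ × ℝ))
    (hPsort : Ps.Pairwise (fun a b => a.1 ≤ b.1))
    (hQsort : Qs.Pairwise (fun a b => a.1 ≤ b.1))
    (hPpos : ∀ x ∈ Ps, 0 < x.2) (hQpos : ∀ x ∈ Qs, 0 < x.2)
    (htot : (Ps.map Prod.snd).sum = (Qs.map Prod.snd).sum)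
    (hsat : ∃ a : Fin Ps.length → Fin Qs.length → ℝ,
      (∀ i j, 0 ≤ a i j) ∧
      (∀ i j, a i j ≠ 0 → |(Ps.get i).1 - (Qs.get j).1| ≤ lam) ∧
      (∀ i, ∑ j, a i j ≤ (Ps.get i).2) ∧
      (∀ j, ∑ i, a i j ≤ (Qs.get j).2) ∧
      (∑ i, ∑ j, a i j = (Ps.map Prod.snd).sum)) :
    greedy lam Ps Qs = (Ps.map Prod.snd).sum := by
  obtain ⟨a, ha0, ha1, ha2, ha3, hatot⟩ := hsat
  apply greedy_aux lam hlam (Ps.length + Qs.length) Ps Qs le_rfl hPsort hQsort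
    (fun x hx => (hPpos x hx).le) (fun x hx => (hQpos x hx).le) htot
  set A : ℕ → ℕ → ℝ := fun i j =>
    if h : i < Ps.length ∧ j < Qs.length then a ⟨i, h.1⟩ ⟨j, h.2⟩ else 0 with hAdef
  have key : ∀ i (hi : i < Ps.length),
      ∑ j ∈ Finset.range Qs.length, A i j = ∑ j, a ⟨i, hi⟩ j := by
    intro i hi
    rw [← Fin.sum_univ_eq_sum_range]
    apply Finset.sum_congr rfl
    intro j _
    simp only [hAdef]
    rw [dif_pos ⟨hi, j.isLt⟩]
  have key2 : ∀ j (hj : j < Qs.length),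
      ∑ i ∈ Finset.range Ps.length, A i j = ∑ i, a i ⟨j, hj⟩ := by
    intro j hj
    rw [← Fin.sum_univ_eq_sum_range]
    apply Finset.sum_congr rfl
    intro i _
    simp only [hAdef]
    rw [dif_pos ⟨i.isLt, hj⟩]
  refine ⟨A, ?_, ?_, ?_, ?_, ?_⟩
  · intro i j
    simp only [hAdef]
    split_ifs
    · exact ha0 _ _
    · exact le_rfl
  · intro i hi j hj hne
    simp only [hAdef] at hne
    rw [dif_pos ⟨hi, hj⟩] at hne
    have := ha1 ⟨i, hi⟩ ⟨j, hj⟩ hne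
    rw [List.getD_eq_getElem _ _ hi, List.getD_eq_getElem _ _ hj]
    simpa using this
  · intro i hi
    rw [key i hi, List.getD_eq_getElem _ _ hi]
    simpa using ha2 ⟨i, hi⟩
  · intro j hj
    rw [key2 j hj, List.getD_eq_getElem _ _ hj]
    simpa using ha3 ⟨j, hj⟩
  · rw [← Fin.sum_univ_eq_sum_range (fun i => ∑ j ∈ Finset.range Qs.length, A i j)]
    rw [← hatot]
    apply Finset.sum_congr rfl
    intro i _
    rw [key ↑i i.isLt]
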